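/- Let A be a C*-algebra, c ∈ A₊ and ε > 0, and let e ∈ C*(c)₊ satisfy e(c−ε)₊ = (c−ε)₊. Suppose b ∈ Mₙ(her((c−ε)₊)) is such that Σ_{i=1}^n b_{i,i} = Σ_{i=1}^n [x_i, y_i] with x_i, y_i ∈ her((c−ε)₊). Then b is the sum of two commutators in Mₙ(A). -/

import Mathlib

variable {A : Type*} [NonUnitalCStarAlgebra A] [PartialOrder A] [StarOrderedRing A]

/-- The hereditary subalgebra generated by `d`, i.e. the closure of `dAd`. -/
def her (d : A) : Set A := closure {x | ∃ y : A, x = d * y * d}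

/-- Let `c ∈ A₊`, `ε > 0`, and `e ∈ C*(c)₊` with `e(c−ε)₊ = (c−ε)₊`.  If
`b ∈ Mₙ(her((c−ε)₊))` is such that `Σᵢ bᵢᵢ = Σᵢ [xᵢ, yᵢ]` with `xᵢ, yᵢ ∈ her((c−ε)₊)`,
then `b` is the sum of two commutators in `Mₙ(A)`. -/
theorem matrix_sum_two_commutators
    (c : A) (hc : 0 ≤ c) (ε : ℝ) (hε : 0 < ε)
    (e : A) (he_mem : e ∈ closure (NonUnitalStarAlgebra.adjoin ℂ {c} : Set A))
    (he_pos : 0 ≤ e)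
    (he : e * cfcₙ (fun t : ℝ => max (t - ε) 0) c = cfcₙ (fun t : ℝ => max (t - ε) 0) c)
    (n : ℕ) (b : Matrix (Fin n) (Fin n) A)
    (hb : ∀ i j, b i j ∈ her (cfcₙ (fun t : ℝ => max (t - ε) 0) c))
    (x y : Fin n → A)
    (hxy : ∀ i, x i ∈ her (cfcₙ (fun t : ℝ => max (t - ε) 0) c) ∧
      y i ∈ her (cfcₙ (fun t : ℝ => max (t - ε) 0) c))
    (hdiag : ∑ i, b i i = ∑ i, (x i * y i - y i * x i)) :
    ∃ x₁ y₁ x₂ y₂ : Matrix (Fin n) (Fin n) A,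
      b = (x₁ * y₁ - y₁ * x₁) + (x₂ * y₂ - y₂ * x₂) := by
  classical
  set d := cfcₙ (fun t : ℝ => max (t - ε) 0) c with hd
  have hdsa : IsSelfAdjoint d := cfcₙ_predicate _ c
  have hesa : IsSelfAdjoint e := .of_nonneg he_pos
  have hed : e * d = d := he
  have hde : d * e = d := by
    have h := congrArg star he
    rw [star_mul, hdsa.star_eq, hesa.star_eq] at h
    exact h
  -- e is a two-sided local unit for her d
  have hU : ∀ a ∈ her d, e * a = a ∧ a * e = a := by
    intro a ha
    have hsub : her d ⊆ {a : A | e * a = a} ∩ {a : A | a * e = a} := by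
      refine closure_minimal ?_ ?_
      · rintro a ⟨w, rfl⟩
        refine ⟨?_, ?_⟩
        · show e * (d * w * d) = d * w * d
          rw [← mul_assoc, ← mul_assoc, hed]
        · show d * w * d * e = d * w * d
          rw [mul_assoc (d * w), hde]
      · exact (isClosed_eq (continuous_const.mul continuous_id) continuous_id).inter
          (isClosed_eq (continuous_id.mul continuous_const) continuous_id)
    exact hsub ha
  have hex : ∀ i, e * x i = x i := fun i => (hU _ (hxy i).1).1
  have hxe : ∀ i, x i * e = x i := fun i => (hU _ (hxy i).1).2
  have hey : ∀ i, e * y i = y i := fun i => (hU _ (hxy i).2).1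
  have hye : ∀ i, y i * e = y i := fun i => (hU _ (hxy i).2).2
  have heb : ∀ i j, e * b i j = b i j := fun i j => (hU _ (hb i j)).1
  have hbe : ∀ i j, b i j * e = b i j := fun i j => (hU _ (hb i j)).2
  -- the diagonal data and its partial sums
  set f : Fin n → A := fun i => b i i - (x i * y i - y i * x i) with hf
  set T : ℕ → A := fun m => ∑ j ∈ Finset.range m, (if h : j < n then f ⟨j, h⟩ else 0) with hT
  have hef : ∀ i, e * f i = f i := by
    intro i
    rw [hf]
    simp only
    rw [mul_sub, mul_sub, ← mul_assoc, ← mul_assoc, hex, hey, heb]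
  have hfe : ∀ i, f i * e = f i := by
    intro i
    rw [hf]
    simp only
    rw [sub_mul, sub_mul, mul_assoc, mul_assoc, hxe, hye, hbe]
  have heT : ∀ m, e * T m = T m := by
    intro m
    rw [hT]
    simp only
    rw [Finset.mul_sum]
    refine Finset.sum_congr rfl fun j _ => ?_
    split_ifs with h
    · exact hef _
    · exact mul_zero e
  have hTe : ∀ m, T m * e = T m := by
    intro m
    rw [hT]
    simp only
    rw [Finset.sum_mul]
    refine Finset.sum_congr rfl fun j _ => ?_
    split_ifs with h
    · exact hfe _
    · exact zero_mul e
  have hT0 : T 0 = 0 := by simp [hT]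
  have hTn : T n = 0 := by
    have h1 : T n = ∑ i : Fin n, f i := by
      rw [hT]
      simp only
      rw [← Fin.sum_univ_eq_sum_range (fun j => if h : j < n then f ⟨j, h⟩ else 0) n]
      exact Finset.sum_congr rfl fun i _ => by rw [dif_pos i.isLt]
    rw [h1, hf]
    simp only
    rw [Finset.sum_sub_distrib, hdiag, sub_self]
  have hTsucc : ∀ i : Fin n, T ((i : ℕ) + 1) = T (i : ℕ) + f i := by
    intro i
    rw [hT]
    simp only
    rw [Finset.sum_range_succ, dif_pos i.isLt]
  -- the matrices
  set N : Matrix (Fin n) (Fin n) A :=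
    Matrix.of fun i j => if (i : ℕ) + 1 = (j : ℕ) then T ((i : ℕ) + 1) else 0 with hN
  set P : Matrix (Fin n) (Fin n) A :=
    Matrix.of fun i j => if (j : ℕ) + 1 = (i : ℕ) then e else 0 with hP
  set X : Matrix (Fin n) (Fin n) A := Matrix.diagonal x with hX
  set Y : Matrix (Fin n) (Fin n) A := Matrix.diagonal y with hY
  have hNP : ∀ i j, (N * P) i j =
      if i = j ∧ (i : ℕ) + 1 < n then T ((i : ℕ) + 1) * e else 0 := by
    intro i j
    rw [Matrix.mul_apply]
    by_cases h : (i : ℕ) + 1 < n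
    · rw [Finset.sum_eq_single (⟨(i : ℕ) + 1, h⟩ : Fin n)]
      · simp only [hN, hP, Matrix.of_apply, Fin.val_mk]
        by_cases hij : i = j
        · subst hij
          simp [h]
        · have h2 : ¬((j : ℕ) + 1 = (i : ℕ) + 1) := fun hc => hij (Fin.ext (by omega))
          simp [h2, hij, show ¬((j : ℕ) = (i : ℕ)) from fun hc => hij (Fin.ext hc.symm)]
      · intro k _ hk
        have hc : ¬((i : ℕ) + 1 = (k : ℕ)) := fun hc => hk (Fin.ext hc.symm)
        simp [hN, hc]
      · intro hk
        exact absurd (Finset.mem_univ _) hk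
    · have hr : ¬(i = j ∧ (i : ℕ) + 1 < n) := fun hc => h hc.2
      rw [if_neg hr, Finset.sum_eq_zero]
      intro k _
      have hc : ¬((i : ℕ) + 1 = (k : ℕ)) := fun hc => h (hc ▸ k.isLt)
      simp [hN, hc]
  have hPN : ∀ i j, (P * N) i j =
      if i = j ∧ 0 < (i : ℕ) then e * T (i : ℕ) else 0 := by
    intro i j
    rw [Matrix.mul_apply]
    by_cases h : 0 < (i : ℕ)
    · have hlt : (i : ℕ) - 1 < n := by have := i.isLt; omega
      rw [Finset.sum_eq_single (⟨(i : ℕ) - 1, hlt⟩ : Fin n)]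
      · simp only [hP, hN, Matrix.of_apply, Fin.val_mk]
        have h1 : (i : ℕ) - 1 + 1 = (i : ℕ) := by omega
        rw [h1]
        by_cases hij : i = j
        · subst hij
          simp [h]
        · have h2 : ¬((i : ℕ) = (j : ℕ)) := fun hc => hij (Fin.ext hc)
          simp [h2, hij]
      · intro k _ hk
        have hc : ¬((k : ℕ) + 1 = (i : ℕ)) := fun hc => hk (Fin.ext (show (k:ℕ) = (i:ℕ)-1 by omega))
        simp [hP, hc]
      · intro hk
        exact absurd (Finset.mem_univ _) hk
    · have hr : ¬(i = j ∧ 0 < (i : ℕ)) := fun hc => h hc.2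
      rw [if_neg hr, Finset.sum_eq_zero]
      intro k _
      have hc : ¬((k : ℕ) + 1 = (i : ℕ)) := by omega
      simp [hP, hc]
  have hNPd : ∀ i : Fin n, (N * P) i i - (P * N) i i = f i := by
    intro i
    rw [hNP, hPN]
    have h1 : (if i = i ∧ (i : ℕ) + 1 < n then T ((i : ℕ) + 1) * e else 0)
        = T ((i : ℕ) + 1) := by
      split_ifs with h
      · exact hTe _
      · have h' : ¬((i : ℕ) + 1 < n) := fun hc => h ⟨rfl, hc⟩
        have hn : (i : ℕ) + 1 = n := by have := i.isLt; omega
        rw [hn, hTn]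
    have h2 : (if i = i ∧ 0 < (i : ℕ) then e * T (i : ℕ) else 0) = T (i : ℕ) := by
      split_ifs with h
      · exact heT _
      · have h' : ¬(0 < (i : ℕ)) := fun hc => h ⟨rfl, hc⟩
        have hz : (i : ℕ) = 0 := by omega
        rw [hz, hT0]
    rw [h1, h2, hTsucc, add_sub_cancel_left]
  -- the off-diagonal correction terms
  set g : Fin n → Fin n → A := fun i j =>
    (if (i : ℕ) + 1 = (j : ℕ) then T ((i : ℕ) + 1) * y j - y i * T ((i : ℕ) + 1) else 0) +
    (if (j : ℕ) + 1 = (i : ℕ) then x i - x j else 0) with hg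
  have hge : ∀ i j, e * g i j = g i j ∧ g i j * e = g i j := by
    intro i j
    rw [hg]
    simp only
    constructor
    · rw [mul_add]
      congr 1
      · split_ifs with h
        · rw [mul_sub, ← mul_assoc, ← mul_assoc, heT, hey]
        · exact mul_zero e
      · split_ifs with h
        · rw [mul_sub, hex, hex]
        · exact mul_zero e
    · rw [add_mul]
      congr 1
      · split_ifs with h
        · rw [sub_mul, mul_assoc, mul_assoc, hTe, hye]
        · exact zero_mul e
      · split_ifs with h
        · rw [sub_mul, hxe, hxe]
        · exact zero_mul e
  set E : Matrix (Fin n) (Fin n) A :=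
    Matrix.diagonal (fun i => (((n : ℂ) - ((i : ℕ) : ℂ))) • e) with hE
  set M : Matrix (Fin n) (Fin n) A :=
    Matrix.of (fun i j => if i = j then 0
      else ((((j : ℕ) : ℂ) - ((i : ℕ) : ℂ))⁻¹) • (b i j - g i j)) with hM
  refine ⟨E, M, N + X, P + Y, ?_⟩
  have hEM : ∀ i j, (E * M - M * E) i j = if i = j then 0 else b i j - g i j := by
    intro i j
    rw [Matrix.sub_apply, hE, Matrix.diagonal_mul, Matrix.mul_diagonal]
    by_cases hij : i = j
    · subst hij
      rw [hM, Matrix.of_apply, if_pos rfl]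
      simp
    · rw [hM, Matrix.of_apply, if_neg hij, if_neg hij]
      set κ : ℂ := ((j : ℕ) : ℂ) - ((i : ℕ) : ℂ) with hκ
      have hκ0 : κ ≠ 0 := by
        rw [hκ, sub_ne_zero]
        intro hc
        exact hij (Fin.val_injective (Nat.cast_injective hc.symm))
      set a : A := b i j - g i j with ha
      have hea : e * a = a := by
        rw [ha, mul_sub, heb, (hge i j).1]
      have hae : a * e = a := by
        rw [ha, sub_mul, hbe, (hge i j).2]
      rw [smul_mul_smul_comm, smul_mul_smul_comm, hea, hae]
      rw [← sub_smul]
      have : ((n : ℂ) - ((i : ℕ) : ℂ)) * κ⁻¹ - κ⁻¹ * ((n : ℂ) - ((j : ℕ) : ℂ)) = 1 := by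
        field_simp [hκ]
        rw [hκ]; ring
      rw [this, one_smul]
  have hC2 : ∀ i j, ((N + X) * (P + Y) - (P + Y) * (N + X)) i j =
      if i = j then b i i else g i j := by
    intro i j
    rw [hX, hY]
    simp only [add_mul, mul_add, Matrix.sub_apply, Matrix.add_apply,
      Matrix.mul_diagonal, Matrix.diagonal_mul]
    rw [hNP, hPN]
    by_cases hij : i = j
    · subst hij
      rw [if_pos rfl]
      have hNii : N i i = 0 := by rw [hN, Matrix.of_apply, if_neg (by omega)]
      have hPii : P i i = 0 := by rw [hP, Matrix.of_apply, if_neg (by omega)]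
      simp only [hNii, hPii, Matrix.diagonal_apply_eq, zero_mul, mul_zero,
        add_zero, zero_add]
      have h1 := hNPd i
      rw [hNP, hPN] at h1
      simp only [eq_self_iff_true, true_and] at h1 ⊢
      rw [sub_eq_iff_eq_add.mp h1]
      simp only [hf]
      abel
    · rw [if_neg hij]
      have hij' : ¬(i = j ∧ (i : ℕ) + 1 < n) := fun hc => hij hc.1
      have hij'' : ¬(i = j ∧ 0 < (i : ℕ)) := fun hc => hij hc.1
      rw [if_neg hij', if_neg hij'']
      simp only [Matrix.diagonal_apply_ne _ hij, zero_mul, mul_zero, add_zero, zero_add]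
      rw [hN, hP]
      simp only [Matrix.of_apply, hg]
      by_cases h1 : (i : ℕ) + 1 = (j : ℕ) <;> by_cases h2 : (j : ℕ) + 1 = (i : ℕ)
      · exact absurd h2 (by omega)
      · simp only [if_pos h1, if_neg h2, mul_zero, zero_mul, add_zero, zero_add]
      · simp only [if_neg h1, if_pos h2, mul_zero, zero_mul, add_zero, zero_add, hxe, hex]
      · simp only [if_neg h1, if_neg h2, mul_zero, zero_mul, add_zero, zero_add, sub_zero]
  ext i j
  rw [Matrix.add_apply, hEM, hC2]
  by_cases hij : i = j
  · subst hij
    rw [if_pos rfl, if_pos rfl, zero_add]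
  · rw [if_neg hij, if_neg hij]
    abel
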